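/- arXiv:2101.02081 — 2 statements merged into one kernel-verified Lean document; each statement's English description precedes it below -/
import Mathlib

section
/- Let m < 0 and let r*(r) be a function satisfying r*(r) = r + 2m log(r/R₀) + O(log²(r/R₀)/r) as r → ∞, and let A, B be as above (A = 1 - 2m/r + Gm²/r², B = 1 + 2m/r + m²/r²). Then (B(r)/A(r))·(r²/r*(r)²) = 1 + 4m/r - 4m log(r/R₀)/r + O(log²(r/R₀)/r²), and in particular there exists R₂ > 0 such that (B(r)/A(r))·(r²/r*(r)²) > 1 for all r ≥ R₂. -/
open Real

private lemma abs_sub'' (a b : ℝ) : |a - b| ≤ |a| + |b| := by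
  simpa [sub_eq_add_neg] using abs_add_le a (-b)

private lemma log_le_two_sqrt (x : ℝ) (hx : 1 ≤ x) : Real.log x ≤ 2 * Real.sqrt x := by
  have h0 : (0:ℝ) < x := by linarith
  have h1 : Real.log (Real.sqrt x) ≤ Real.sqrt x - 1 :=
    Real.log_le_sub_one_of_pos (Real.sqrt_pos.mpr h0)
  have h2 : Real.log (Real.sqrt x) = Real.log x / 2 := Real.log_sqrt h0.le
  rw [h2] at h1
  linarith only [h1, Real.sqrt_nonneg x]

private lemma log_sq_le_four_mul (x : ℝ) (hx : 1 ≤ x) : (Real.log x) ^ 2 ≤ 4 * x := by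
  have h1 := log_le_two_sqrt x hx
  have h2 : 0 ≤ Real.log x := Real.log_nonneg hx
  have h3 : Real.sqrt x ^ 2 = x := Real.sq_sqrt (by linarith)
  nlinarith only [h1, h2, h3, Real.sqrt_nonneg x]

set_option maxHeartbeats 1000000 in
/-- Proposition 3.3 of the paper in analytic form: for negative mass the angular
coefficient `(B/A)(r²/r*²)` of the compactified metric expands as
`1 + 4m/r - 4m log(r/R₀)/r + O(log²(r/R₀)/r²)` and is eventually `> 1`. -/
theorem angular_coefficient_exceeds_one (m G R₀ : ℝ) (hm : m < 0) (hR₀ : 0 < R₀)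
    (A B : ℝ → ℝ)
    (hA : ∀ r, A r = 1 - 2 * m / r + G * m ^ 2 / r ^ 2)
    (hB : ∀ r, B r = 1 + 2 * m / r + m ^ 2 / r ^ 2)
    (rstar : ℝ → ℝ)
    (hrstar : ∃ C R : ℝ, 0 < C ∧ 0 < R ∧ ∀ r, R ≤ r →
      |rstar r - r - 2 * m * Real.log (r / R₀)| ≤ C * (Real.log (r / R₀)) ^ 2 / r) :
    (∃ C' R' : ℝ, 0 < C' ∧ 0 < R' ∧ ∀ r, R' ≤ r →
      |B r / A r * (r ^ 2 / (rstar r) ^ 2)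
        - (1 + 4 * m / r - 4 * m * Real.log (r / R₀) / r)|
        ≤ C' * (Real.log (r / R₀)) ^ 2 / r ^ 2) ∧
    (∃ R₂ : ℝ, 0 < R₂ ∧ ∀ r, R₂ ≤ r →
      1 < B r / A r * (r ^ 2 / (rstar r) ^ 2)) := by
  obtain ⟨C, R, hC, hR, hEst⟩ := hrstar
  obtain ⟨K₁, hK₁def⟩ : ∃ x : ℝ, x = 2 * (|9 - G| * m ^ 2 + 4 * |G| * |m| ^ 3) := ⟨_, rfl⟩
  obtain ⟨K₃, hK₃def⟩ : ∃ x : ℝ, x = 8 * m ^ 2 + 8 * C ^ 2 / R₀ := ⟨_, rfl⟩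
  obtain ⟨K₂, hK₂def⟩ : ∃ x : ℝ, x = 7 * K₃ + 2 * C := ⟨_, rfl⟩
  obtain ⟨C', hC'def⟩ : ∃ x : ℝ, x = 2 * K₁ + 2 * K₂ + 16 * m ^ 2 + 1 := ⟨_, rfl⟩
  obtain ⟨R', hR'def⟩ : ∃ x : ℝ,
    x = R + R₀ * Real.exp 1 + 1024 * m ^ 2 / R₀ + 32 * C / R₀ + 8 * |m| + 4 * |G| * m ^ 2 + 1 :=
    ⟨_, rfl⟩
  have hK₁0 : 0 ≤ K₁ := by rw [hK₁def]; positivity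
  have hK₃0 : 0 ≤ K₃ := by rw [hK₃def]; positivity
  have hK₂0 : 0 ≤ K₂ := by rw [hK₂def]; linarith only [hK₃0, hC]
  have hC'pos : 0 < C' := by rw [hC'def]; nlinarith only [hK₁0, hK₂0, sq_nonneg m]
  have ht1 : 0 ≤ R₀ * Real.exp 1 := by positivity
  have ht2 : 0 ≤ 1024 * m ^ 2 / R₀ := by positivity
  have ht3 : 0 ≤ 32 * C / R₀ := div_nonneg (by linarith only [hC]) hR₀.le
  have ht4 : 0 ≤ 8 * |m| := by positivity
  have ht5 : 0 ≤ 4 * |G| * m ^ 2 := by positivity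
  have hR'pos : 0 < R' := by
    rw [hR'def]; linarith only [hR, ht1, ht2, ht3, ht4, ht5]
  have hmain : ∀ r, R' ≤ r →
      |B r / A r * (r ^ 2 / (rstar r) ^ 2)
        - (1 + 4 * m / r - 4 * m * Real.log (r / R₀) / r)|
        ≤ C' * (Real.log (r / R₀)) ^ 2 / r ^ 2 := by
    intro r hr
    rw [hR'def] at hr
    have hrR : R ≤ r := by linarith only [hr, ht1, ht2, ht3, ht4, ht5]
    have hr1 : (1:ℝ) ≤ r := by linarith only [hr, hR, ht1, ht2, ht3, ht4, ht5]
    have hre : R₀ * Real.exp 1 ≤ r := by linarith only [hr, hR, ht2, ht3, ht4, ht5]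
    have h1024 : 1024 * m ^ 2 / R₀ ≤ r := by linarith only [hr, hR, ht1, ht3, ht4, ht5]
    have h32C : 32 * C / R₀ ≤ r := by linarith only [hr, hR, ht1, ht2, ht4, ht5]
    have h8m : 8 * |m| ≤ r := by linarith only [hr, hR, ht1, ht2, ht3, ht5]
    have h4G : 4 * |G| * m ^ 2 ≤ r := by linarith only [hr, hR, ht1, ht2, ht3, ht4]
    have hr0 : (0:ℝ) < r := by linarith only [hr1]
    obtain ⟨L, hLdef⟩ : ∃ x : ℝ, x = Real.log (r / R₀) := ⟨_, rfl⟩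
    rw [← hLdef]
    have hexp2 : (2:ℝ) ≤ Real.exp 1 := by linarith only [Real.add_one_le_exp (1:ℝ)]
    have hx1 : (1:ℝ) ≤ r / R₀ := by
      rw [le_div_iff₀ hR₀]
      nlinarith only [hR₀, hre, hexp2]
    have hL1 : (1:ℝ) ≤ L := by
      rw [hLdef, Real.le_log_iff_exp_le (div_pos hr0 hR₀), le_div_iff₀ hR₀]
      linarith only [hre]
    have hL0 : (0:ℝ) ≤ L := by linarith only [hL1]
    have hLs : L ^ 2 ≤ 4 * (r / R₀) := by rw [hLdef]; exact log_sq_le_four_mul _ hx1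
    have hL4 : L ^ 2 * R₀ ≤ 4 * r := by
      have h2 := mul_le_mul_of_nonneg_right hLs hR₀.le
      calc L ^ 2 * R₀ ≤ 4 * (r / R₀) * R₀ := h2
        _ = 4 * r := by field_simp
    obtain ⟨u, hudef⟩ : ∃ x : ℝ, x = Real.sqrt (r / R₀) := ⟨_, rfl⟩
    have hu0 : 0 ≤ u := by rw [hudef]; exact Real.sqrt_nonneg _
    have hu2 : R₀ * u ^ 2 = r := by
      rw [hudef, Real.sq_sqrt (div_pos hr0 hR₀).le]; field_simp
    have hL2u : L ≤ 2 * u := by rw [hLdef, hudef]; exact log_le_two_sqrt _ hx1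
    have h1024m : 1024 * m ^ 2 ≤ r * R₀ := (div_le_iff₀ hR₀).mp h1024
    have hv : 32 * |m| ≤ R₀ * u := by
      by_contra hcon
      push_neg at hcon
      have h1 : (R₀ * u) * (R₀ * u) < (32 * |m|) * (32 * |m|) :=
        mul_self_lt_mul_self (mul_nonneg hR₀.le hu0) hcon
      have h2 : (R₀ * u) * (R₀ * u) = R₀ * r := by rw [← hu2]; ring
      have h3 : (32 * |m|) * (32 * |m|) = 1024 * m ^ 2 := by
        rw [show (32 * |m|) * (32 * |m|) = 1024 * |m| ^ 2 by ring, sq_abs]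
      rw [h2, h3] at h1
      linarith only [h1, h1024m]
    have h2mL : 2 * |m| * L ≤ r / 8 := by
      linarith only [mul_le_mul_of_nonneg_left hL2u (abs_nonneg m),
        mul_le_mul_of_nonneg_right hv hu0, hu2]
    have hE := hEst r hrR
    rw [← hLdef] at hE
    obtain ⟨s, hsdef⟩ : ∃ x : ℝ, x = rstar r := ⟨_, rfl⟩
    rw [← hsdef] at hE ⊢
    obtain ⟨E, hEdef⟩ : ∃ x : ℝ, x = s - r - 2 * m * L := ⟨_, rfl⟩
    have hEb : |E| ≤ C * L ^ 2 / r := by rw [hEdef]; exact hE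
    have hCL2 : C * L ^ 2 ≤ r ^ 2 / 8 := by
      nlinarith only [mul_le_mul_of_nonneg_left hL4 hC.le,
        mul_le_mul_of_nonneg_right ((div_le_iff₀ hR₀).mp h32C) hr0.le, hR₀, hr0]
    have hEr : |E| ≤ r / 8 := by
      calc |E| ≤ C * L ^ 2 / r := hEb
        _ ≤ (r ^ 2 / 8) / r := (div_le_div_iff_of_pos_right hr0).mpr hCL2
        _ = r / 8 := by field_simp
    have hsr : |s - r| ≤ r / 4 := by
      have hrw : s - r = 2 * m * L + E := by rw [hEdef]; ring
      rw [hrw]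
      have habs : |2 * m * L| = 2 * |m| * L := by
        rw [abs_mul, abs_mul, abs_of_nonneg hL0]
        simp
      calc |2 * m * L + E| ≤ |2 * m * L| + |E| := abs_add_le _ _
        _ ≤ 2 * |m| * L + r / 8 := by rw [habs]; linarith only [hEr]
        _ ≤ r / 8 + r / 8 := by linarith only [h2mL]
        _ = r / 4 := by ring
    have hs_lb : 3 / 4 * r ≤ s := by
      have h := (abs_le.mp hsr).1; linarith only [h]
    have hs_ub : s ≤ 5 / 4 * r := by
      have h := (abs_le.mp hsr).2; linarith only [h]
    have hs0 : (0:ℝ) < s := by linarith only [hs_lb, hr0]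
    have hGm : -(|G| * m ^ 2) ≤ G * m ^ 2 := by
      nlinarith only [neg_abs_le G, sq_nonneg m]
    have hAlow : r ^ 2 / 2 ≤ r ^ 2 - 2 * m * r + G * m ^ 2 := by
      linarith only [h4G, hGm, hr1, hr0.le, mul_nonneg (sub_nonneg.mpr hr1) hr0.le,
        mul_nonneg (by linarith only [hm] : (0:ℝ) ≤ -(2 * m)) hr0.le]
    have hApos2 : (0:ℝ) < r ^ 2 - 2 * m * r + G * m ^ 2 := by
      have h : (0:ℝ) < r ^ 2 / 2 := by positivity
      linarith only [h, hAlow]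
    have hAr : A r = (r ^ 2 - 2 * m * r + G * m ^ 2) / r ^ 2 := by
      rw [hA]; field_simp
    have hBr : B r = (r ^ 2 + 2 * m * r + m ^ 2) / r ^ 2 := by
      rw [hB]; field_simp
    have key1 : B r / A r - (1 + 4 * m / r)
        = ((9 - G) * m ^ 2 * r - 4 * G * m ^ 3) / ((r ^ 2 - 2 * m * r + G * m ^ 2) * r) := by
      rw [hAr, hBr]
      have h1 : (r:ℝ) ^ 2 ≠ 0 := by positivity
      have h2 : (r:ℝ) ≠ 0 := hr0.ne'
      have h3 : r ^ 2 - 2 * m * r + G * m ^ 2 ≠ 0 := hApos2.ne'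
      have h3' : r * (r - 2 * m) + m ^ 2 * G ≠ 0 := by convert h3 using 1; ring
      field_simp
      ring
    have hN1 : |(9 - G) * m ^ 2 * r - 4 * G * m ^ 3| ≤ (K₁ / 2) * r := by
      have e1 : |(9 - G) * m ^ 2 * r| = |9 - G| * m ^ 2 * r := by
        rw [abs_mul, abs_mul, abs_of_nonneg (sq_nonneg m), abs_of_pos hr0]
      have e2 : |4 * G * m ^ 3| = 4 * |G| * |m| ^ 3 := by
        rw [abs_mul, abs_mul, abs_pow]; norm_num
      calc |(9 - G) * m ^ 2 * r - 4 * G * m ^ 3|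
          ≤ |(9 - G) * m ^ 2 * r| + |4 * G * m ^ 3| := abs_sub'' _ _
        _ = |9 - G| * m ^ 2 * r + 4 * |G| * |m| ^ 3 := by rw [e1, e2]
        _ ≤ (K₁ / 2) * r := by
            rw [hK₁def]
            nlinarith only [mul_nonneg (mul_nonneg (by norm_num : (0:ℝ) ≤ 4) (abs_nonneg G))
              (pow_nonneg (abs_nonneg m) 3), sub_nonneg.mpr hr1]
    have step1 : |B r / A r - (1 + 4 * m / r)| ≤ K₁ / r ^ 2 := by
      rw [key1, abs_div, abs_of_pos (mul_pos hApos2 hr0),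
        div_le_div_iff₀ (mul_pos hApos2 hr0) (by positivity : (0:ℝ) < r ^ 2)]
      linarith only [mul_le_mul_of_nonneg_right hN1 (sq_nonneg r),
        mul_le_mul_of_nonneg_right (mul_le_mul_of_nonneg_left hAlow hK₁0) hr0.le]
    have key2 : r ^ 2 / s ^ 2 - (3 * r - 2 * s) / r
        = (s - r) ^ 2 * (2 * s + r) / (r * s ^ 2) := by
      rw [div_sub_div _ _ (by positivity : (s:ℝ) ^ 2 ≠ 0) hr0.ne',
        div_eq_div_iff (by positivity : ((s:ℝ) ^ 2 * r) ≠ 0)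
          (by positivity : ((r:ℝ) * s ^ 2) ≠ 0)]
      ring
    have hfrac_nonneg : 0 ≤ (s - r) ^ 2 * (2 * s + r) / (r * s ^ 2) :=
      div_nonneg (mul_nonneg (sq_nonneg _) (by linarith only [hs0, hr0]))
        (mul_nonneg hr0.le (sq_nonneg s))
    have hfac : (2 * s + r) * r ≤ 7 * s ^ 2 := by
      nlinarith only [mul_nonneg (by linarith only [hs_lb] : (0:ℝ) ≤ s - 3 / 4 * r) hr0.le,
        mul_nonneg (by linarith only [hs_lb] : (0:ℝ) ≤ s - 3 / 4 * r)
          (by linarith only [hs0] : (0:ℝ) ≤ s),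
        sq_nonneg r, hr0]
    have step2a : |r ^ 2 / s ^ 2 - (3 * r - 2 * s) / r| ≤ 7 * (s - r) ^ 2 / r ^ 2 := by
      rw [key2, abs_of_nonneg hfrac_nonneg,
        div_le_div_iff₀ (mul_pos hr0 (pow_pos hs0 2)) (pow_pos hr0 2)]
      linarith only [mul_le_mul_of_nonneg_right
        (mul_le_mul_of_nonneg_left hfac (sq_nonneg (s - r))) hr0.le]
    have hE2 : E ^ 2 ≤ C ^ 2 * L ^ 4 / r ^ 2 := by
      have h := abs_le.mp hEb
      have h2 : E ^ 2 ≤ (C * L ^ 2 / r) ^ 2 := sq_le_sq' (by linarith only [h.1]) h.2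
      calc E ^ 2 ≤ (C * L ^ 2 / r) ^ 2 := h2
        _ = C ^ 2 * L ^ 4 / r ^ 2 := by ring
    have hE3 : 2 * E ^ 2 ≤ 8 * C ^ 2 / R₀ * L ^ 2 := by
      have h1 : E ^ 2 * r ^ 2 ≤ C ^ 2 * L ^ 4 := by
        have h := mul_le_mul_of_nonneg_right hE2 (sq_nonneg r)
        calc E ^ 2 * r ^ 2 ≤ C ^ 2 * L ^ 4 / r ^ 2 * r ^ 2 := h
          _ = C ^ 2 * L ^ 4 := by field_simp
      have hpos : (0:ℝ) < R₀ * r ^ 2 := mul_pos hR₀ (pow_pos hr0 2)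
      have key : 2 * E ^ 2 * (R₀ * r ^ 2) ≤ 8 * C ^ 2 / R₀ * L ^ 2 * (R₀ * r ^ 2) := by
        have hrhs : 8 * C ^ 2 / R₀ * L ^ 2 * (R₀ * r ^ 2) = 8 * C ^ 2 * L ^ 2 * r ^ 2 := by
          field_simp
        rw [hrhs]
        nlinarith only [h1, hR₀,
          mul_le_mul_of_nonneg_left hL4 (by positivity : (0:ℝ) ≤ C ^ 2 * L ^ 2),
          mul_nonneg (by positivity : (0:ℝ) ≤ C ^ 2 * L ^ 2)
            (mul_nonneg (sub_nonneg.mpr hr1) hr0.le)]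
      exact le_of_mul_le_mul_right key hpos
    have step2c : (s - r) ^ 2 ≤ K₃ * L ^ 2 := by
      have hrw : s - r = 2 * m * L + E := by rw [hEdef]; ring
      rw [hrw, hK₃def]
      nlinarith only [sq_nonneg (2 * m * L - E), hE3]
    have step2d : |(3 * r - 2 * s) / r - (1 - 4 * m * L / r)| ≤ 2 * C * L ^ 2 / r ^ 2 := by
      have hrw : (3 * r - 2 * s) / r - (1 - 4 * m * L / r) = -(2 * E) / r := by
        rw [hEdef]
        field_simp
        ring
      have habs : |(-(2 * E))| = 2 * |E| := by rw [abs_neg, abs_mul]; norm_num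
      rw [hrw, abs_div, habs, abs_of_pos hr0, div_le_div_iff₀ hr0 (pow_pos hr0 2)]
      have hEbr : |E| * r ≤ C * L ^ 2 := (le_div_iff₀ hr0).mp hEb
      linarith only [mul_le_mul_of_nonneg_right hEbr hr0.le]
    have step2 : |r ^ 2 / s ^ 2 - (1 - 4 * m * L / r)| ≤ K₂ * L ^ 2 / r ^ 2 := by
      calc |r ^ 2 / s ^ 2 - (1 - 4 * m * L / r)|
          ≤ |r ^ 2 / s ^ 2 - (3 * r - 2 * s) / r|
            + |(3 * r - 2 * s) / r - (1 - 4 * m * L / r)| := abs_sub_le _ _ _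
        _ ≤ 7 * (s - r) ^ 2 / r ^ 2 + 2 * C * L ^ 2 / r ^ 2 := add_le_add step2a step2d
        _ ≤ 7 * (K₃ * L ^ 2) / r ^ 2 + 2 * C * L ^ 2 / r ^ 2 := by
            have h := (div_le_div_iff_of_pos_right (pow_pos hr0 2)).mpr
              (mul_le_mul_of_nonneg_left step2c (by norm_num : (0:ℝ) ≤ 7))
            linarith only [h]
        _ = K₂ * L ^ 2 / r ^ 2 := by rw [hK₂def]; ring
    have hy2 : r ^ 2 / s ^ 2 ≤ 2 := by
      rw [div_le_iff₀ (pow_pos hs0 2)]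
      nlinarith only [hs_lb, hr0]
    have hy0 : 0 ≤ r ^ 2 / s ^ 2 := div_nonneg (sq_nonneg r) (sq_nonneg s)
    have ha2 : |1 + 4 * m / r| ≤ 2 := by
      have h4 : -r ≤ 4 * m := by linarith only [h8m, neg_abs_le m, hm]
      have hlo : -(1:ℝ) ≤ 4 * m / r := by
        rw [le_div_iff₀ hr0]; linarith only [h4]
      have hhi : 4 * m / r ≤ 0 :=
        div_nonpos_of_nonpos_of_nonneg (by linarith only [hm]) hr0.le
      rw [abs_le]; constructor
      · linarith only [hlo]
      · linarith only [hhi]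
    have key3 : B r / A r * (r ^ 2 / s ^ 2) - (1 + 4 * m / r - 4 * m * L / r)
        = (B r / A r - (1 + 4 * m / r)) * (r ^ 2 / s ^ 2)
          + (1 + 4 * m / r) * (r ^ 2 / s ^ 2 - (1 - 4 * m * L / r))
          - 16 * m ^ 2 * L / r ^ 2 := by
      ring
    have h31 : |(B r / A r - (1 + 4 * m / r)) * (r ^ 2 / s ^ 2)| ≤ K₁ / r ^ 2 * 2 := by
      rw [abs_mul]
      exact mul_le_mul step1 (by rw [abs_of_nonneg hy0]; exact hy2) (abs_nonneg _)
        (div_nonneg hK₁0 (sq_nonneg r))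
    have h32 : |(1 + 4 * m / r) * (r ^ 2 / s ^ 2 - (1 - 4 * m * L / r))|
        ≤ 2 * (K₂ * L ^ 2 / r ^ 2) := by
      rw [abs_mul]
      exact mul_le_mul ha2 step2 (abs_nonneg _) (by norm_num)
    have h33 : |16 * m ^ 2 * L / r ^ 2| = 16 * m ^ 2 * L / r ^ 2 :=
      abs_of_nonneg (div_nonneg (mul_nonneg (by positivity) hL0) (sq_nonneg r))
    have hXY : 2 * K₁ + 2 * K₂ * L ^ 2 + 16 * m ^ 2 * L
        ≤ (2 * K₁ + 2 * K₂ + 16 * m ^ 2 + 1) * L ^ 2 := by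
      linarith only [mul_nonneg hK₁0 (by nlinarith only [hL1] : (0:ℝ) ≤ L ^ 2 - 1),
        mul_nonneg (sq_nonneg m) (by nlinarith only [hL1] : (0:ℝ) ≤ L ^ 2 - L),
        sq_nonneg L, mul_nonneg hK₂0 (sq_nonneg L)]
    calc |B r / A r * (r ^ 2 / s ^ 2) - (1 + 4 * m / r - 4 * m * L / r)|
        = |(B r / A r - (1 + 4 * m / r)) * (r ^ 2 / s ^ 2)
            + (1 + 4 * m / r) * (r ^ 2 / s ^ 2 - (1 - 4 * m * L / r))
            - 16 * m ^ 2 * L / r ^ 2| := by rw [key3]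
      _ ≤ |(B r / A r - (1 + 4 * m / r)) * (r ^ 2 / s ^ 2)
            + (1 + 4 * m / r) * (r ^ 2 / s ^ 2 - (1 - 4 * m * L / r))|
            + |16 * m ^ 2 * L / r ^ 2| := abs_sub'' _ _
      _ ≤ K₁ / r ^ 2 * 2 + 2 * (K₂ * L ^ 2 / r ^ 2) + 16 * m ^ 2 * L / r ^ 2 := by
          have h := abs_add_le ((B r / A r - (1 + 4 * m / r)) * (r ^ 2 / s ^ 2))
            ((1 + 4 * m / r) * (r ^ 2 / s ^ 2 - (1 - 4 * m * L / r)))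
          linarith only [h, h31, h32, h33.le, h33.ge]
      _ = (2 * K₁ + 2 * K₂ * L ^ 2 + 16 * m ^ 2 * L) / r ^ 2 := by ring
      _ ≤ (2 * K₁ + 2 * K₂ + 16 * m ^ 2 + 1) * L ^ 2 / r ^ 2 :=
          (div_le_div_iff_of_pos_right (pow_pos hr0 2)).mpr hXY
      _ = C' * L ^ 2 / r ^ 2 := by rw [hC'def]
  constructor
  · exact ⟨C', R', hC'pos, hR'pos, hmain⟩
  · refine ⟨R' + R₀ * Real.exp (2 + C' / (-m * R₀)),
      by linarith only [hR'pos, mul_pos hR₀ (Real.exp_pos (2 + C' / (-m * R₀)))], ?_⟩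
    intro r hr2
    have hexpK : 0 < R₀ * Real.exp (2 + C' / (-m * R₀)) :=
      mul_pos hR₀ (Real.exp_pos _)
    have hrR' : R' ≤ r := by linarith only [hr2, hexpK]
    have hr0 : (0:ℝ) < r := lt_of_lt_of_le hR'pos hrR'
    have hbound := hmain r hrR'
    obtain ⟨L, hLdef⟩ : ∃ x : ℝ, x = Real.log (r / R₀) := ⟨_, rfl⟩
    rw [← hLdef] at hbound
    obtain ⟨K, hKdef⟩ : ∃ x : ℝ, x = 2 + C' / (-m * R₀) := ⟨_, rfl⟩
    rw [← hKdef] at hr2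
    have hK2 : (2:ℝ) ≤ K := by
      rw [hKdef]
      have h : 0 ≤ C' / (-m * R₀) :=
        div_nonneg hC'pos.le (mul_nonneg (by linarith only [hm]) hR₀.le)
      linarith only [h]
    have hLK : K ≤ L := by
      rw [hLdef, Real.le_log_iff_exp_le (div_pos hr0 hR₀), le_div_iff₀ hR₀]
      linarith only [hr2, hR'pos]
    have hL1 : (1:ℝ) ≤ L := by linarith only [hLK, hK2]
    have hx1 : (1:ℝ) ≤ r / R₀ := by
      rw [le_div_iff₀ hR₀]
      nlinarith only [Real.add_one_le_exp K, hR₀, hR'pos, hK2, hr2]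
    have hLs : L ^ 2 ≤ 4 * (r / R₀) := by rw [hLdef]; exact log_sq_le_four_mul _ hx1
    have hL4 : L ^ 2 * R₀ ≤ 4 * r := by
      have h2 := mul_le_mul_of_nonneg_right hLs hR₀.le
      calc L ^ 2 * R₀ ≤ 4 * (r / R₀) * R₀ := h2
        _ = 4 * r := by field_simp
    have hCL : C' * L ^ 2 * R₀ ≤ 4 * C' * r := by
      linarith only [mul_le_mul_of_nonneg_left hL4 hC'pos.le]
    have hK1' : -(4 * m) * (K - 1) * R₀ = -(4 * m) * R₀ + 4 * C' := by
      have hm0 : m ≠ 0 := hm.ne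
      have hmR : -m * R₀ ≠ 0 := (mul_pos (neg_pos.mpr hm) hR₀).ne'
      rw [hKdef]
      field_simp
      ring
    have hnumR : 0 < (4 * m * r - 4 * m * L * r - C' * L ^ 2) * R₀ := by
      have T1 : 0 ≤ (L - K) * (-(4 * m) * (R₀ * r)) :=
        mul_nonneg (sub_nonneg.mpr hLK)
          (mul_nonneg (by linarith only [hm]) (mul_nonneg hR₀.le hr0.le))
      have hK1r : -(4 * m) * (K - 1) * R₀ * r = (-(4 * m) * R₀ + 4 * C') * r := by rw [hK1']
      have P2 : 0 < -m * (R₀ * r) := mul_pos (by linarith only [hm]) (mul_pos hR₀ hr0)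
      nlinarith only [T1, hK1r, hCL, P2]
    have hnum : 0 < 4 * m * r - 4 * m * L * r - C' * L ^ 2 := by
      nlinarith only [hnumR, hR₀]
    have heq : 4 * m / r - 4 * m * L / r - C' * L ^ 2 / r ^ 2
        = (4 * m * r - 4 * m * L * r - C' * L ^ 2) / r ^ 2 := by
      field_simp
    have hdivpos : 0 < (4 * m * r - 4 * m * L * r - C' * L ^ 2) / r ^ 2 :=
      div_pos hnum (pow_pos hr0 2)
    have hlow := (abs_le.mp hbound).1
    linarith only [hlow, hdivpos, heq.le, heq.ge]
end

section
/- In Minkowski space ℝ^{1,3} with metric dt² - dr² - r²(dθ² + sin²θ dφ²), consider two points p, q whose angular coordinates are antipodal on the sphere (angular distance π). Any causal curve from p to q satisfies t(q) - t(p) ≥ r(p) + r(q), with equality only for a null geodesic passing through the spatial origin or reaching infinity; equivalently, a point p′ on past null infinity can be connected by causal curves through Minkowski space only to points on future null infinity at or to the future of the antipodal point q′. -/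
open Set

open scoped RealInnerProductSpace Topology

/-- Time-of-flight bound in Minkowski space `ℝ^{1,3}` between antipodal spatial
directions: any future-directed causal curve from `p` (spatial position `rp • n`)
to `q` (spatial position `-rq • n`) satisfies `t(q) - t(p) ≥ rp + rq`, with
equality only for a null curve passing through the spatial origin. -/
theorem minkowski_antipodal_time_of_flight
    (γt : ℝ → ℝ) (γx : ℝ → EuclideanSpace ℝ (Fin 3)) (a b : ℝ) (hab : a ≤ b)
    (hdt : DifferentiableOn ℝ γt (Set.Icc a b))
    (hdx : DifferentiableOn ℝ γx (Set.Icc a b))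
    (hcausal : ∀ s ∈ Set.Icc a b,
      ‖derivWithin γx (Set.Icc a b) s‖ ≤ derivWithin γt (Set.Icc a b) s)
    (n : EuclideanSpace ℝ (Fin 3)) (hn : ‖n‖ = 1)
    (rp rq : ℝ) (hrp : 0 ≤ rp) (hrq : 0 ≤ rq)
    (hpa : γx a = rp • n) (hqb : γx b = (-rq) • n) :
    rp + rq ≤ γt b - γt a ∧
    (γt b - γt a = rp + rq →
      (∀ s ∈ Set.Icc a b,
        ‖derivWithin γx (Set.Icc a b) s‖ = derivWithin γt (Set.Icc a b) s) ∧
      ∃ s ∈ Set.Icc a b, γx s = 0) := by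
  rcases eq_or_lt_of_le hab with rfl | hlt
  · -- degenerate case a = b
    have hrr : rp + rq = 0 := by
      have h1 : (rp + rq) • n = 0 := by
        have := hpa.symm.trans hqb
        rw [add_smul, neg_smul] at *
        linear_combination (norm := module) this
      have hn0 : n ≠ 0 := by intro h; rw [h, norm_zero] at hn; norm_num at hn
      rcases smul_eq_zero.1 h1 with h | h
      · exact h
      · exact absurd h hn0
    constructor
    · simp [hrr]
    · intro _
      have hiso : ∀ s ∈ Set.Icc a a, (𝓝[Set.Icc a a \ {s}] s) = ⊥ := by
        intro s hs
        simp only [Set.Icc_self] at hs ⊢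
        simp only [Set.mem_singleton_iff] at hs
        subst hs
        simp
      refine ⟨fun s hs => ?_, ⟨a, by simp, ?_⟩⟩
      · rw [derivWithin_zero_of_not_accPt (by rw [accPt_principal_iff_nhdsWithin, hiso s hs]; exact fun h => h.ne rfl), derivWithin_zero_of_not_accPt (by rw [accPt_principal_iff_nhdsWithin, hiso s hs]; exact fun h => h.ne rfl)]
        simp
      · have hrp0 : rp = 0 := by
          have := hrr; nlinarith
        rw [hpa, hrp0, zero_smul]
  · -- main case a < b
    have hud : UniqueDiffOn ℝ (Set.Icc a b) := uniqueDiffOn_Icc hlt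
    set u : EuclideanSpace ℝ (Fin 3) := -n with hu
    have hnn : ⟪n, n⟫ = 1 := by
      rw [real_inner_self_eq_norm_sq, hn]; norm_num
    -- f s = γt s - ⟪u, γx s⟫
    set f : ℝ → ℝ := fun s => γt s - ⟪u, γx s⟫ with hf
    have hderivf : ∀ s ∈ Set.Icc a b, HasDerivWithinAt f
        (derivWithin γt (Set.Icc a b) s - ⟪u, derivWithin γx (Set.Icc a b) s⟫)
        (Set.Icc a b) s := by
      intro s hs
      have ht := (hdt s hs).hasDerivWithinAt
      have hx := (hdx s hs).hasDerivWithinAt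
      have hin : HasDerivWithinAt (fun t => ⟪u, γx t⟫)
          (⟪u, derivWithin γx (Set.Icc a b) s⟫) (Set.Icc a b) s := by
        have := (hasDerivWithinAt_const s (Set.Icc a b) u).inner ℝ hx
        simpa using this
      exact ht.sub hin
    have hfnonneg : ∀ s ∈ Set.Icc a b,
        0 ≤ derivWithin γt (Set.Icc a b) s - ⟪u, derivWithin γx (Set.Icc a b) s⟫ := by
      intro s hs
      have h1 : ⟪u, derivWithin γx (Set.Icc a b) s⟫ ≤ ‖derivWithin γx (Set.Icc a b) s‖ := by
        calc ⟪u, derivWithin γx (Set.Icc a b) s⟫ ≤ ‖u‖ * ‖derivWithin γx (Set.Icc a b) s‖ :=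
              real_inner_le_norm _ _
        _ = ‖derivWithin γx (Set.Icc a b) s‖ := by rw [hu, norm_neg, hn, one_mul]
      linarith [hcausal s hs]
    have hmono : MonotoneOn f (Set.Icc a b) := by
      apply monotoneOn_of_deriv_nonneg (convex_Icc a b)
      · exact fun s hs => (hderivf s hs).differentiableWithinAt.continuousWithinAt
      · intro s hs
        rw [interior_Icc] at hs
        have hmem : Set.Icc a b ∈ 𝓝 s := Icc_mem_nhds hs.1 hs.2
        exact ((hderivf s (Set.mem_Icc_of_Ioo hs)).hasDerivAt hmem).differentiableAt.differentiableWithinAt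
      · intro s hs
        rw [interior_Icc] at hs
        have hmem : Set.Icc a b ∈ 𝓝 s := Icc_mem_nhds hs.1 hs.2
        rw [((hderivf s (Set.mem_Icc_of_Ioo hs)).hasDerivAt hmem).deriv]
        exact hfnonneg s (Set.mem_Icc_of_Ioo hs)
    have hia : ⟪u, γx a⟫ = -rp := by
      rw [hpa, hu, real_inner_smul_right, inner_neg_left, hnn]; ring
    have hib : ⟪u, γx b⟫ = rq := by
      rw [hqb, hu, real_inner_smul_right, inner_neg_left, hnn]; ring
    have hfab : f a ≤ f b := hmono (Set.left_mem_Icc.2 hab) (Set.right_mem_Icc.2 hab) hab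
    have hmain : rp + rq ≤ γt b - γt a := by
      simp only [hf, hia, hib] at hfab; linarith
    refine ⟨hmain, fun heq => ?_⟩
    -- equality case: f is constant on Icc a b
    have hfba : f b = f a := by simp only [hf, hia, hib]; linarith
    have hconst : ∀ s ∈ Set.Icc a b, f s = f a := by
      intro s hs
      have h1 : f a ≤ f s := hmono (Set.left_mem_Icc.2 hab) hs hs.1
      have h2 : f s ≤ f b := hmono hs (Set.right_mem_Icc.2 hab) hs.2
      linarith [hfba ▸ h2]
    have hderiv0 : ∀ s ∈ Set.Icc a b,
        derivWithin γt (Set.Icc a b) s = ⟪u, derivWithin γx (Set.Icc a b) s⟫ := by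
      intro s hs
      have hzero : HasDerivWithinAt f 0 (Set.Icc a b) s :=
        (hasDerivWithinAt_const s (Set.Icc a b) (f a)).congr hconst (hconst s hs)
      have := (hderivf s hs).derivWithin (hud s hs)
      have h0 := hzero.derivWithin (hud s hs)
      rw [this] at h0
      linarith [h0]
    have hnormeq : ∀ s ∈ Set.Icc a b,
        ‖derivWithin γx (Set.Icc a b) s‖ = derivWithin γt (Set.Icc a b) s := by
      intro s hs
      have h1 : ⟪u, derivWithin γx (Set.Icc a b) s⟫ ≤ ‖derivWithin γx (Set.Icc a b) s‖ := by
        calc ⟪u, derivWithin γx (Set.Icc a b) s⟫ ≤ ‖u‖ * ‖derivWithin γx (Set.Icc a b) s‖ :=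
              real_inner_le_norm _ _
        _ = ‖derivWithin γx (Set.Icc a b) s‖ := by rw [hu, norm_neg, hn, one_mul]
      have := hcausal s hs
      have := hderiv0 s hs
      linarith
    refine ⟨hnormeq, ?_⟩
    -- γx' s = (γt' s) • u : Cauchy–Schwarz equality case
    have hpar : ∀ s ∈ Set.Icc a b,
        derivWithin γx (Set.Icc a b) s = (derivWithin γt (Set.Icc a b) s) • u := by
      intro s hs
      have hun : ‖u‖ = 1 := by rw [hu, norm_neg, hn]
      have hcs : ⟪u, derivWithin γx (Set.Icc a b) s⟫
          = ‖u‖ * ‖derivWithin γx (Set.Icc a b) s‖ := by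
        rw [hun, one_mul, hnormeq s hs]
        exact (hderiv0 s hs).symm
      have h2 := inner_eq_norm_mul_iff_real.1 hcs
      rw [hun, one_smul] at h2
      rw [← hnormeq s hs]
      exact h2.symm
    -- h s := γx s + γt s • n is constant
    set h : ℝ → EuclideanSpace ℝ (Fin 3) := fun s => γx s + γt s • n with hh
    have hdiffh : DifferentiableOn ℝ h (Set.Icc a b) :=
      hdx.add (hdt.smul_const n)
    have hhconst : ∀ s ∈ Set.Icc a b, h s = h a := by
      apply constant_of_derivWithin_zero hdiffh
      intro s hs
      have hs' : s ∈ Set.Icc a b := Set.mem_Icc_of_Ico hs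
      have hdh : HasDerivWithinAt h
          (derivWithin γx (Set.Icc a b) s + derivWithin γt (Set.Icc a b) s • n)
          (Set.Icc a b) s :=
        (hdx s hs').hasDerivWithinAt.add ((hdt s hs').hasDerivWithinAt.smul_const n)
      have : derivWithin γx (Set.Icc a b) s + derivWithin γt (Set.Icc a b) s • n = 0 := by
        rw [hpar s hs', hu]
        module
      rw [this] at hdh
      exact hdh.derivWithin (hud s hs')
    have hxs : ∀ s ∈ Set.Icc a b, γx s = (rp + γt a - γt s) • n := by
      intro s hs
      have := hhconst s hs
      simp only [hh, hpa] at this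
      have : γx s = rp • n + γt a • n - γt s • n := by
        linear_combination (norm := module) this
      rw [this]; module
    -- IVT for γt
    have hcont : ContinuousOn γt (Set.Icc a b) := hdt.continuousOn
    have hval : γt a + rp ∈ Set.Icc (γt a) (γt b) := by
      constructor
      · linarith
      · linarith [heq]
    obtain ⟨s, hs, hts⟩ := intermediate_value_Icc hab hcont hval
    refine ⟨s, hs, ?_⟩
    rw [hxs s hs, hts]
    have : rp + γt a - (γt a + rp) = 0 := by ring
    rw [this, zero_smul]
end
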